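/- Let (Ω, 𝓕, P) be a probability space, let Y : Ω → 𝒴 and φ : Ω → 𝒮 be measurable maps into standard Borel spaces, and let τ : 𝒴 → Ψ be a measurable map into a standard Borel space. Assume that for every bounded σ(φ)-measurable function f : Ω → ℝ, E_P[f | σ(τ ∘ Y)] = E_P[f | σ(Y)] P-almost surely. Then the mutual information is preserved: klDiv( P.map ⟨Y, φ⟩ , (P.map Y).prod (P.map φ) ) = klDiv( P.map ⟨τ∘Y, φ⟩ , (P.map (τ∘Y)).prod (P.map φ) ). -/

import Mathlib

open MeasureTheory
open scoped ENNReal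
open Classical
open ProbabilityTheory

/-- Kullback–Leibler divergence: `∫ log (dμ/dν) dμ` when `μ ≪ ν` with integrable
log-density, and `+∞` otherwise. -/
noncomputable def klDiv {α : Type*} [MeasurableSpace α] (μ ν : Measure α) : ℝ≥0∞ :=
  if μ ≪ ν ∧ Integrable (fun x => Real.log ((μ.rnDeriv ν x).toReal)) μ then
    ENNReal.ofReal (∫ x, Real.log ((μ.rnDeriv ν x).toReal) ∂μ)
  else ⊤

section Aux

variable {𝒴 Ψ 𝒮 : Type*} [MeasurableSpace 𝒴] [MeasurableSpace Ψ] [MeasurableSpace 𝒮]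

lemma aux_compProd_withDensity (a : Measure 𝒴) [SFinite a] (κ : Kernel 𝒴 𝒮) [IsSFiniteKernel κ]
    {g : 𝒴 → 𝒮 → ℝ≥0∞} (hg : Measurable (Function.uncurry g))
    [IsSFiniteKernel (κ.withDensity g)] :
    a ⊗ₘ (κ.withDensity g) = (a ⊗ₘ κ).withDensity (fun p => g p.1 p.2) := by
  ext s hs
  rw [Measure.compProd_apply hs, withDensity_apply _ hs, ← lintegral_indicator hs _,
    Measure.lintegral_compProd (f := s.indicator fun p => g p.1 p.2) (hg.indicator hs)]
  refine lintegral_congr fun y => ?_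
  rw [Kernel.withDensity_apply' κ hg, ← lintegral_indicator (measurable_prodMk_left hs) _]
  refine lintegral_congr fun x => ?_
  by_cases hx : (y, x) ∈ s <;> simp [Set.indicator_apply, hx]

variable [MeasurableSpace.CountableOrCountablyGenerated Ψ 𝒮]

lemma aux_decomp (a : Measure 𝒴) [IsFiniteMeasure a] (ρ : Measure 𝒮) [IsFiniteMeasure ρ]
    (η : Kernel Ψ 𝒮) [IsFiniteKernel η] (τ : 𝒴 → Ψ) (hτ : Measurable τ) :
    a ⊗ₘ (η.comap τ hτ)
      = (a.prod ρ).withDensity (fun p => Kernel.rnDeriv η (Kernel.const Ψ ρ) (τ p.1) p.2)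
        + a ⊗ₘ ((η.singularPart (Kernel.const Ψ ρ)).comap τ hτ) := by
  set W : Kernel Ψ 𝒮 := (Kernel.const Ψ ρ).withDensity (Kernel.rnDeriv η (Kernel.const Ψ ρ))
    with hW
  haveI : IsFiniteKernel W := by
    refine isFiniteKernel_of_le (ν := η) ?_
    conv_rhs => rw [← Kernel.rnDeriv_add_singularPart η (Kernel.const Ψ ρ)]
    intro a' s'
    simp only [Kernel.add_apply, Measure.add_apply]
    exact le_self_add
  have hcomap : η.comap τ hτ = W.comap τ hτ + (η.singularPart (Kernel.const Ψ ρ)).comap τ hτ := by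
    conv_lhs => rw [← Kernel.rnDeriv_add_singularPart η (Kernel.const Ψ ρ)]
    ext y s hs
    simp [Kernel.comap_apply, hW]
  rw [hcomap, Measure.compProd_add_right]
  congr 1
  have hmeas : Measurable (Function.uncurry
      (fun y s => Kernel.rnDeriv η (Kernel.const Ψ ρ) (τ y) s : 𝒴 → 𝒮 → ℝ≥0∞)) :=
    (Kernel.measurable_rnDeriv η (Kernel.const Ψ ρ)).comp (hτ.prodMap measurable_id)
  have hWc : W.comap τ hτ
      = (Kernel.const 𝒴 ρ).withDensity
          (fun y s => Kernel.rnDeriv η (Kernel.const Ψ ρ) (τ y) s) := by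
    ext y : 1
    rw [Kernel.comap_apply, hW,
      Kernel.withDensity_apply _ (Kernel.measurable_rnDeriv _ _),
      Kernel.withDensity_apply (Kernel.const 𝒴 ρ)
        (f := fun y s => Kernel.rnDeriv η (Kernel.const Ψ ρ) (τ y) s) hmeas,
      Kernel.const_apply, Kernel.const_apply]
  haveI : IsSFiniteKernel ((Kernel.const 𝒴 ρ).withDensity
      (fun y s => Kernel.rnDeriv η (Kernel.const Ψ ρ) (τ y) s)) := hWc ▸ inferInstance
  rw [hWc, aux_compProd_withDensity a _ hmeas, Measure.compProd_const]

lemma aux_sing (a : Measure 𝒴) [IsFiniteMeasure a] (ρ : Measure 𝒮) [IsFiniteMeasure ρ]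
    (η : Kernel Ψ 𝒮) [IsFiniteKernel η] (τ : 𝒴 → Ψ) (hτ : Measurable τ) :
    (a ⊗ₘ ((η.singularPart (Kernel.const Ψ ρ)).comap τ hτ)) ⟂ₘ (a.prod ρ) := by
  set S : Set (Ψ × 𝒮) := Kernel.mutuallySingularSet η (Kernel.const Ψ ρ) with hS
  have hSm : MeasurableSet S := Kernel.measurableSet_mutuallySingularSet _ _
  have hTm : Measurable (Prod.map τ (id : 𝒮 → 𝒮)) := hτ.prodMap measurable_id
  have hslice : ∀ y : 𝒴, Prod.mk y ⁻¹' (Prod.map τ (id : 𝒮 → 𝒮) ⁻¹' S)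
      = Kernel.mutuallySingularSetSlice η (Kernel.const Ψ ρ) (τ y) := by
    intro y
    ext x
    simp only [Set.mem_preimage, Prod.map_apply, id_eq, hS,
      Kernel.mutuallySingularSet, Kernel.mutuallySingularSetSlice, Set.mem_setOf_eq]
  refine ⟨(Prod.map τ (id : 𝒮 → 𝒮) ⁻¹' S)ᶜ, (hTm hSm).compl, ?_, ?_⟩
  · rw [Measure.compProd_apply (hTm hSm).compl]
    have : ∀ y : 𝒴, ((η.singularPart (Kernel.const Ψ ρ)).comap τ hτ) y
        (Prod.mk y ⁻¹' (Prod.map τ (id : 𝒮 → 𝒮) ⁻¹' S)ᶜ) = 0 := by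
      intro y
      rw [Kernel.comap_apply, Set.preimage_compl, hslice y,
        Kernel.singularPart_compl_mutuallySingularSetSlice]
    simp only [this, lintegral_zero]
  · rw [compl_compl, Measure.prod_apply (hTm hSm)]
    have : ∀ y : 𝒴, ρ (Prod.mk y ⁻¹' (Prod.map τ (id : 𝒮 → 𝒮) ⁻¹' S)) = 0 := by
      intro y
      rw [hslice y]
      simpa using Kernel.measure_mutuallySingularSetSlice η (Kernel.const Ψ ρ) (τ y)
    simp only [this, lintegral_zero]

lemma aux_rnDeriv (a : Measure 𝒴) [IsFiniteMeasure a] (ρ : Measure 𝒮) [IsFiniteMeasure ρ]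
    (η : Kernel Ψ 𝒮) [IsFiniteKernel η] (τ : 𝒴 → Ψ) (hτ : Measurable τ) :
    (fun p => Kernel.rnDeriv η (Kernel.const Ψ ρ) (τ p.1) p.2)
      =ᵐ[a.prod ρ] (a ⊗ₘ (η.comap τ hτ)).rnDeriv (a.prod ρ) := by
  refine Measure.eq_rnDeriv (s := a ⊗ₘ ((η.singularPart (Kernel.const Ψ ρ)).comap τ hτ))
    ((Kernel.measurable_rnDeriv η (Kernel.const Ψ ρ)).comp (hτ.prodMap measurable_id))
    (aux_sing a ρ η τ hτ) ?_
  rw [aux_decomp a ρ η τ hτ, add_comm]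

lemma aux_ac (a : Measure 𝒴) [IsFiniteMeasure a] (ρ : Measure 𝒮) [IsFiniteMeasure ρ]
    (η : Kernel Ψ 𝒮) [IsFiniteKernel η] (τ : 𝒴 → Ψ) (hτ : Measurable τ) :
    (a ⊗ₘ (η.comap τ hτ)) ≪ (a.prod ρ)
      ↔ a ⊗ₘ ((η.singularPart (Kernel.const Ψ ρ)).comap τ hτ) = 0 := by
  constructor
  · intro h
    have hle : a ⊗ₘ ((η.singularPart (Kernel.const Ψ ρ)).comap τ hτ) ≤ a ⊗ₘ (η.comap τ hτ) := by
      rw [aux_decomp a ρ η τ hτ]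
      exact Measure.le_add_left le_rfl
    have hac : a ⊗ₘ ((η.singularPart (Kernel.const Ψ ρ)).comap τ hτ) ≪ a.prod ρ :=
      (Measure.absolutelyContinuous_of_le hle).trans h
    obtain ⟨u, hu, hu1, hu2⟩ := aux_sing a ρ η τ hτ
    rw [← Measure.measure_univ_eq_zero, ← Set.union_compl_self u]
    refine le_antisymm ((measure_union_le _ _).trans ?_) zero_le
    rw [hu1, hac hu2, add_zero]
  · intro h
    rw [aux_decomp a ρ η τ hτ, h, add_zero]
    exact withDensity_absolutelyContinuous _ _

end Aux

/-- Sufficiency: if conditioning on the statistic `τ ∘ Y` gives the same conditional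
expectations for bounded `σ(φ)`-measurable functions as conditioning on `Y`, then the
mutual information is preserved: `I(Y ; φ) = I(τ ∘ Y ; φ)`. -/
theorem mutualInfo_eq_of_sufficient
    {Ω 𝒴 𝒮 Ψ : Type*} [MeasurableSpace Ω]
    [MeasurableSpace 𝒴] [StandardBorelSpace 𝒴]
    [MeasurableSpace 𝒮] [StandardBorelSpace 𝒮]
    [MeasurableSpace Ψ] [StandardBorelSpace Ψ]
    (P : Measure Ω) [IsProbabilityMeasure P]
    (Y : Ω → 𝒴) (hY : Measurable Y)
    (φ : Ω → 𝒮) (hφ : Measurable φ)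
    (τ : 𝒴 → Ψ) (hτ : Measurable τ)
    (hsuff : ∀ f : Ω → ℝ,
      StronglyMeasurable[MeasurableSpace.comap φ inferInstance] f →
      (∃ C, ∀ ω, |f ω| ≤ C) →
      P[f | MeasurableSpace.comap (fun ω => τ (Y ω)) inferInstance]
        =ᵐ[P] P[f | MeasurableSpace.comap Y inferInstance]) :
    klDiv (P.map (fun ω => (Y ω, φ ω))) ((P.map Y).prod (P.map φ))
      = klDiv (P.map (fun ω => (τ (Y ω), φ ω)))
          ((P.map (fun ω => τ (Y ω))).prod (P.map φ)) := by
  have hΩ : Nonempty Ω := by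
    by_contra h
    rw [not_nonempty_iff] at h
    have := measure_univ (μ := P)
    simp [Set.univ_eq_empty_iff.mpr h] at this
  have h𝒮 : Nonempty 𝒮 := ⟨φ (Classical.arbitrary Ω)⟩
  have hτY : Measurable (fun ω => τ (Y ω)) := hτ.comp hY
  set a : Measure 𝒴 := P.map Y with ha
  set ρ : Measure 𝒮 := P.map φ with hρ
  set b : Measure Ψ := P.map (fun ω => τ (Y ω)) with hb
  haveI : IsProbabilityMeasure a := Measure.isProbabilityMeasure_map hY.aemeasurable
  haveI : IsProbabilityMeasure ρ := Measure.isProbabilityMeasure_map hφ.aemeasurable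
  haveI : IsProbabilityMeasure b := Measure.isProbabilityMeasure_map hτY.aemeasurable
  set μ : Measure (𝒴 × 𝒮) := P.map (fun ω => (Y ω, φ ω)) with hμdef
  set μ' : Measure (Ψ × 𝒮) := P.map (fun ω => (τ (Y ω), φ ω)) with hμ'def
  haveI : IsProbabilityMeasure μ := Measure.isProbabilityMeasure_map (hY.prodMk hφ).aemeasurable
  haveI : IsProbabilityMeasure μ' := Measure.isProbabilityMeasure_map (hτY.prodMk hφ).aemeasurable
  set η : Kernel Ψ 𝒮 := condDistrib φ (fun ω => τ (Y ω)) P with hη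
  -- disintegration of μ'
  have h2 : μ' = b ⊗ₘ η := by
    have hfst : μ'.fst = b := Measure.fst_map_prodMk hφ
    rw [hη, condDistrib_def, ← hfst]
    exact (μ'.disintegrate μ'.condKernel).symm
  -- sufficiency disintegration of μ
  have h1 : μ = a ⊗ₘ (η.comap τ hτ) := by
    refine ext_of_generate_finite _ generateFrom_prod.symm isPiSystem_prod ?_ ?_
    swap
    · have hone : (a ⊗ₘ (η.comap τ hτ)) Set.univ = 1 := by
        rw [Measure.compProd_apply MeasurableSet.univ]
        simp [Kernel.comap_apply]
      rw [hone, measure_univ]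
    rintro u ⟨t, ht, s, hs, rfl⟩
    simp only [Set.mem_setOf_eq] at ht hs
    have hL : μ (t ×ˢ s) = P (Y ⁻¹' t ∩ φ ⁻¹' s) := by
      rw [hμdef, Measure.map_apply (hY.prodMk hφ) (ht.prod hs), Set.mk_preimage_prod]
    have hR : (a ⊗ₘ (η.comap τ hτ)) (t ×ˢ s) = ∫⁻ y in t, η (τ y) s ∂a := by
      rw [Measure.compProd_apply_prod ht hs]
      exact lintegral_congr fun y => by rw [Kernel.comap_apply]
    set f : Ω → ℝ := (φ ⁻¹' s).indicator (fun _ => (1:ℝ)) with hfdef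
    have hintf : Integrable f P := (integrable_const 1).indicator (hφ hs)
    have hf_meas : StronglyMeasurable[MeasurableSpace.comap φ inferInstance] f :=
      stronglyMeasurable_const.indicator ⟨s, hs, rfl⟩
    have hf_bdd : ∃ C, ∀ ω, |f ω| ≤ C := by
      refine ⟨1, fun ω => ?_⟩
      by_cases h : ω ∈ φ ⁻¹' s <;> simp [hfdef, Set.indicator_apply, h]
    have hsuff' := hsuff f hf_meas hf_bdd
    have hcd := condDistrib_ae_eq_condExp (μ := P) hτY hφ hs
    have hYt : MeasurableSet (Y ⁻¹' t) := hY ht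
    have key : ∫ ω in Y ⁻¹' t, f ω ∂P
        = ∫ ω in Y ⁻¹' t, ((η (τ (Y ω)) s).toReal) ∂P := by
      calc ∫ ω in Y ⁻¹' t, f ω ∂P
          = ∫ ω in Y ⁻¹' t, (P[f | MeasurableSpace.comap Y inferInstance]) ω ∂P :=
            (setIntegral_condExp hY.comap_le hintf ⟨t, ht, rfl⟩).symm
        _ = ∫ ω in Y ⁻¹' t,
              (P[f | MeasurableSpace.comap (fun ω => τ (Y ω)) inferInstance]) ω ∂P :=
            setIntegral_congr_ae hYt (hsuff'.symm.mono fun ω h _ => h)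
        _ = ∫ ω in Y ⁻¹' t, ((η (τ (Y ω)) s).toReal) ∂P :=
            setIntegral_congr_ae hYt (hcd.symm.mono fun ω h _ => h)
    have hLv : ∫ ω in Y ⁻¹' t, f ω ∂P = (P (Y ⁻¹' t ∩ φ ⁻¹' s)).toReal := by
      rw [hfdef, setIntegral_indicator (hφ hs), setIntegral_const, smul_eq_mul, mul_one, measureReal_def]
    have hηm : Measurable (fun y => (η (τ y) s).toReal) :=
      ((Kernel.measurable_coe η hs).comp hτ).ennreal_toReal
    have hRv : ∫ ω in Y ⁻¹' t, ((η (τ (Y ω)) s).toReal) ∂P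
        = (∫⁻ y in t, η (τ y) s ∂a).toReal := by
      have e1 : ∫ y in t, (η (τ y) s).toReal ∂a
          = ∫ ω in Y ⁻¹' t, ((η (τ (Y ω)) s).toReal) ∂P := by
        rw [ha, Measure.restrict_map hY ht,
          integral_map hY.aemeasurable hηm.aestronglyMeasurable]
      rw [← e1]
      refine integral_toReal (((Kernel.measurable_coe η hs).comp hτ).aemeasurable) ?_
      exact Filter.Eventually.of_forall fun y => measure_lt_top _ _
    have hfin : ∫⁻ y in t, η (τ y) s ∂a ≠ ⊤ := by
      have hle : ∫⁻ y in t, η (τ y) s ∂a ≤ ∫⁻ _ in t, 1 ∂a :=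
        lintegral_mono fun y => prob_le_one
      rw [setLIntegral_one] at hle
      exact (hle.trans_lt (measure_lt_top a t)).ne
    rw [hL, hR]
    exact (ENNReal.toReal_eq_toReal_iff' (measure_ne_top P _) hfin).mp
      (hLv.symm.trans (key.trans hRv))
  -- b is the pushforward of a
  have h3 : b = a.map τ := by
    rw [ha, Measure.map_map hτ hY]
    rfl
  -- μ' is the pushforward of μ
  have h4 : μ' = μ.map (Prod.map τ id) := by
    rw [hμdef, Measure.map_map (hτ.prodMap measurable_id) (hY.prodMk hφ)]
    rfl
  -- Radon–Nikodym derivative identifications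
  have h5 : μ.rnDeriv (a.prod ρ)
      =ᵐ[a.prod ρ] (fun p => Kernel.rnDeriv η (Kernel.const Ψ ρ) (τ p.1) p.2) := by
    rw [h1]
    exact (aux_rnDeriv a ρ η τ hτ).symm
  have h6 : μ'.rnDeriv (b.prod ρ)
      =ᵐ[b.prod ρ] (fun p => Kernel.rnDeriv η (Kernel.const Ψ ρ) p.1 p.2) := by
    have haux := aux_rnDeriv b ρ η id measurable_id
    rw [Kernel.comap_id] at haux
    rw [h2]
    exact haux.symm
  -- the singular parts vanish simultaneously
  have hsing_iff : (a ⊗ₘ ((η.singularPart (Kernel.const Ψ ρ)).comap τ hτ) = 0)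
      ↔ (b ⊗ₘ ((η.singularPart (Kernel.const Ψ ρ)).comap id measurable_id) = 0) := by
    rw [← Measure.measure_univ_eq_zero, ← Measure.measure_univ_eq_zero]
    have e1 : (a ⊗ₘ ((η.singularPart (Kernel.const Ψ ρ)).comap τ hτ)) Set.univ
        = ∫⁻ y, (η.singularPart (Kernel.const Ψ ρ)) (τ y) Set.univ ∂a := by
      rw [Measure.compProd_apply MeasurableSet.univ]
      refine lintegral_congr fun y => ?_
      rw [Kernel.comap_apply, Set.preimage_univ]
    have e2 : (b ⊗ₘ ((η.singularPart (Kernel.const Ψ ρ)).comap id measurable_id)) Set.univ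
        = ∫⁻ z, (η.singularPart (Kernel.const Ψ ρ)) z Set.univ ∂b := by
      rw [Measure.compProd_apply MeasurableSet.univ]
      refine lintegral_congr fun z => ?_
      rw [Kernel.comap_apply, Set.preimage_univ]
      rfl
    rw [e1, e2, h3,
      lintegral_map (Kernel.measurable_coe _ MeasurableSet.univ) hτ]
  -- absolute continuity holds simultaneously
  have hac_iff : μ ≪ a.prod ρ ↔ μ' ≪ b.prod ρ := by
    rw [h1, h2, aux_ac a ρ η τ hτ]
    conv_rhs => rw [← Kernel.comap_id η]
    rw [aux_ac b ρ η id measurable_id]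
    exact hsing_iff
  -- measurability of the common density
  have hFmeas : Measurable (fun p : Ψ × 𝒮 =>
      Real.log ((Kernel.rnDeriv η (Kernel.const Ψ ρ) p.1 p.2).toReal)) :=
    (Kernel.measurable_rnDeriv η (Kernel.const Ψ ρ)).ennreal_toReal.log
  have hT : Measurable (Prod.map τ (id : 𝒮 → 𝒮)) := hτ.prodMap measurable_id
  -- integrability transfer
  have hint_iff : μ ≪ a.prod ρ →
      (Integrable (fun x => Real.log ((μ.rnDeriv (a.prod ρ) x).toReal)) μ
        ↔ Integrable (fun x => Real.log ((μ'.rnDeriv (b.prod ρ) x).toReal)) μ') := by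
    intro h
    have h' : μ' ≪ b.prod ρ := hac_iff.mp h
    have e5 : (fun x => Real.log ((μ.rnDeriv (a.prod ρ) x).toReal))
        =ᵐ[μ] fun p => Real.log ((Kernel.rnDeriv η (Kernel.const Ψ ρ) (τ p.1) p.2).toReal) :=
      (h5.filter_mono h.ae_le).mono fun p hp => by simp only [hp]
    have e6 : (fun x => Real.log ((μ'.rnDeriv (b.prod ρ) x).toReal))
        =ᵐ[μ'] fun p => Real.log ((Kernel.rnDeriv η (Kernel.const Ψ ρ) p.1 p.2).toReal) :=
      (h6.filter_mono h'.ae_le).mono fun p hp => by simp only [hp]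
    rw [integrable_congr e5, integrable_congr e6, h4,
      integrable_map_measure hFmeas.aestronglyMeasurable hT.aemeasurable]
    exact Iff.rfl
  -- value transfer
  have hval : μ ≪ a.prod ρ →
      ∫ x, Real.log ((μ.rnDeriv (a.prod ρ) x).toReal) ∂μ
        = ∫ x, Real.log ((μ'.rnDeriv (b.prod ρ) x).toReal) ∂μ' := by
    intro h
    have h' : μ' ≪ b.prod ρ := hac_iff.mp h
    have e5 : (fun x => Real.log ((μ.rnDeriv (a.prod ρ) x).toReal))
        =ᵐ[μ] fun p => Real.log ((Kernel.rnDeriv η (Kernel.const Ψ ρ) (τ p.1) p.2).toReal) :=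
      (h5.filter_mono h.ae_le).mono fun p hp => by simp only [hp]
    have e6 : (fun x => Real.log ((μ'.rnDeriv (b.prod ρ) x).toReal))
        =ᵐ[μ'] fun p => Real.log ((Kernel.rnDeriv η (Kernel.const Ψ ρ) p.1 p.2).toReal) :=
      (h6.filter_mono h'.ae_le).mono fun p hp => by simp only [hp]
    rw [integral_congr_ae e5, integral_congr_ae e6, h4,
      integral_map hT.aemeasurable hFmeas.aestronglyMeasurable]
    rfl
  -- conclusion
  by_cases hC : μ ≪ a.prod ρ
      ∧ Integrable (fun x => Real.log ((μ.rnDeriv (a.prod ρ) x).toReal)) μ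
  · have hC' : μ' ≪ b.prod ρ
        ∧ Integrable (fun x => Real.log ((μ'.rnDeriv (b.prod ρ) x).toReal)) μ' :=
      ⟨hac_iff.mp hC.1, (hint_iff hC.1).mp hC.2⟩
    rw [klDiv, klDiv, if_pos hC, if_pos hC', hval hC.1]
  · have hC' : ¬(μ' ≪ b.prod ρ
        ∧ Integrable (fun x => Real.log ((μ'.rnDeriv (b.prod ρ) x).toReal)) μ') := by
      intro h
      exact hC ⟨hac_iff.mpr h.1, (hint_iff (hac_iff.mpr h.1)).mpr h.2⟩
    rw [klDiv, klDiv, if_neg hC, if_neg hC']
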